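/- Let A, B be positive real numbers. For every g ∈ GL(n,ℝ), every Y ∈ P_n, every symmetric n×n real matrix H, and every W ∈ ℝ^{(m,n)}, setting Y* = g·Y·ᵗg, H* = g·H·ᵗg, and W* = W·ᵗg, one has A·tr(Y*⁻¹·H*·Y*⁻¹·H*) + B·tr(Y*⁻¹·ᵗW*·W*) = A·tr(Y⁻¹·H·Y⁻¹·H) + B·tr(Y⁻¹·ᵗW·W). (This expresses that the Riemannian metric ds²_{n,m;A,B} = A·tr(Y⁻¹dY·Y⁻¹dY) + B·tr(Y⁻¹·ᵗ(dV)·dV) on P_n × ℝ^{(m,n)} is invariant under the GL_{n,m}-action (g,λ)·(Y,V) = (g·Y·ᵗg, (V+λ)·ᵗg).) -/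
import Mathlib


open Matrix

/-- invariance of the metric `ds²_{n,m;A,B}`: with
`Y* = g·Y·ᵗg`, `H* = g·H·ᵗg`, `W* = W·ᵗg` one has
`A·tr(Y*⁻¹H*Y*⁻¹H*) + B·tr(Y*⁻¹·ᵗW*·W*) = A·tr(Y⁻¹HY⁻¹H) + B·tr(Y⁻¹·ᵗW·W)`. -/
theorem stmt_11 (m n : ℕ) (A B : ℝ) (hA : 0 < A) (hB : 0 < B)
    (g : GL (Fin n) ℝ) (Y : Matrix (Fin n) (Fin n) ℝ) (hY : Y.PosDef)
    (H : Matrix (Fin n) (Fin n) ℝ) (hH : Hᵀ = H) (W : Matrix (Fin m) (Fin n) ℝ) :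
    let G : Matrix (Fin n) (Fin n) ℝ := ↑g
    let Ys := G * Y * Gᵀ
    let Hs := G * H * Gᵀ
    let Ws := W * Gᵀ
    A * (Ys⁻¹ * Hs * Ys⁻¹ * Hs).trace + B * (Ys⁻¹ * Wsᵀ * Ws).trace =
      A * (Y⁻¹ * H * Y⁻¹ * H).trace + B * (Y⁻¹ * Wᵀ * W).trace := by
  intro G Ys Hs Ws
  have hGu : IsUnit G.det := (Matrix.isUnit_iff_isUnit_det G).mp g.isUnit
  have hGTu : IsUnit Gᵀ.det := by rwa [Matrix.det_transpose]
  have hYu : IsUnit Y.det := isUnit_iff_ne_zero.mpr hY.det_pos.ne'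
  have hYs : Ys⁻¹ = Gᵀ⁻¹ * Y⁻¹ * G⁻¹ := by
    show (G * Y * Gᵀ)⁻¹ = _
    rw [Matrix.mul_inv_rev, Matrix.mul_inv_rev, mul_assoc]
  have h1 : Ys⁻¹ * Hs = Gᵀ⁻¹ * (Y⁻¹ * H) * Gᵀ := by
    show Ys⁻¹ * (G * H * Gᵀ) = _
    rw [hYs]
    calc Gᵀ⁻¹ * Y⁻¹ * G⁻¹ * (G * H * Gᵀ)
        = Gᵀ⁻¹ * Y⁻¹ * (G⁻¹ * G) * H * Gᵀ := by noncomm_ring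
      _ = Gᵀ⁻¹ * (Y⁻¹ * H) * Gᵀ := by
          rw [Matrix.nonsing_inv_mul G hGu]; noncomm_ring
  have hTr1 : (Ys⁻¹ * Hs * Ys⁻¹ * Hs).trace = (Y⁻¹ * H * Y⁻¹ * H).trace := by
    have : Ys⁻¹ * Hs * Ys⁻¹ * Hs
        = Gᵀ⁻¹ * (Y⁻¹ * H * (Y⁻¹ * H)) * Gᵀ := by
      calc Ys⁻¹ * Hs * Ys⁻¹ * Hs = (Ys⁻¹ * Hs) * (Ys⁻¹ * Hs) := by noncomm_ring
        _ = Gᵀ⁻¹ * (Y⁻¹ * H) * (Gᵀ * Gᵀ⁻¹) * (Y⁻¹ * H) * Gᵀ := by rw [h1]; noncomm_ring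
        _ = _ := by rw [Matrix.mul_nonsing_inv Gᵀ hGTu]; noncomm_ring
    rw [this, Matrix.trace_mul_cycle, Matrix.mul_nonsing_inv Gᵀ hGTu, one_mul]
    noncomm_ring
  have hTr2 : (Ys⁻¹ * Wsᵀ * Ws).trace = (Y⁻¹ * Wᵀ * W).trace := by
    have : Ys⁻¹ * Wsᵀ * Ws = Gᵀ⁻¹ * (Y⁻¹ * Wᵀ * W) * Gᵀ := by
      show Ys⁻¹ * (W * Gᵀ)ᵀ * (W * Gᵀ) = _
      rw [hYs, Matrix.transpose_mul, Matrix.transpose_transpose]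
      calc Gᵀ⁻¹ * Y⁻¹ * G⁻¹ * (G * Wᵀ) * (W * Gᵀ)
          = Gᵀ⁻¹ * Y⁻¹ * (G⁻¹ * G) * Wᵀ * W * Gᵀ := by
            simp only [Matrix.mul_assoc]
        _ = _ := by rw [Matrix.nonsing_inv_mul G hGu, mul_one]
                    simp only [Matrix.mul_assoc]
    rw [this, Matrix.trace_mul_cycle, Matrix.mul_nonsing_inv Gᵀ hGTu, one_mul]
  rw [hTr1, hTr2]
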